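/- Let m ≥ 1, let n_1, ..., n_m ≥ 2 and w_1, ..., w_m ≥ 1 be integers, and let ℓ = ∏_{j=1}^m n_j. Consider the abelian group G presented by generators γ, τ_1, ..., τ_m with relations τ_i^{n_i} = γ^{w_i} for all i (and all generators commuting). Then G is isomorphic to the subgroup of ℤ × ∏_{i=1}^m (ℤ/n_iℤ) generated by the elements g = (ℓ, 0, ..., 0) and t_i = (w_i·ℓ/n_i, e_i), where e_i is the standard generator of the i-th factor ℤ/n_iℤ, via the map γ ↦ g, τ_i ↦ t_i. -/

import Mathlib

open scoped commutatorElement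

/-- Relations for the abelian group presented by generators `γ` (`none`) and
`τ₁, …, τ_m` (`some i`): all generators commute, and `τᵢ^{nᵢ} = γ^{wᵢ}`. -/
def tnwRels (m : ℕ) (n w : Fin m → ℕ) : Set (FreeGroup (Option (Fin m))) :=
  {r | ∃ x y : Option (Fin m), r = ⁅FreeGroup.of x, FreeGroup.of y⁆} ∪
    {r | ∃ i : Fin m, r = FreeGroup.of (some i) ^ n i * (FreeGroup.of none ^ w i)⁻¹}

/-- The element `g = (ℓ, 0, …, 0)` of `ℤ × ∏ᵢ ℤ/nᵢℤ`, where `ℓ = ∏ nⱼ`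
(written multiplicatively). -/
def tnwG (m : ℕ) (n : Fin m → ℕ) : Multiplicative (ℤ × ((i : Fin m) → ZMod (n i))) :=
  Multiplicative.ofAdd (((∏ j, n j : ℕ) : ℤ), 0)

/-- The element `tᵢ = (wᵢ·ℓ/nᵢ, eᵢ)` of `ℤ × ∏ᵢ ℤ/nᵢℤ`, where `eᵢ` is the
standard generator of the `i`-th factor (written multiplicatively). -/
def tnwT (m : ℕ) (n w : Fin m → ℕ) (i : Fin m) :
    Multiplicative (ℤ × ((i : Fin m) → ZMod (n i))) :=
  Multiplicative.ofAdd (((w i * (∏ j, n j) / n i : ℕ) : ℤ), Pi.single i 1)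

section Aux
variable (m : ℕ) (n w : Fin m → ℕ)

/-- The assignment of generators. -/
def tnwF : Option (Fin m) → Multiplicative (ℤ × ((i : Fin m) → ZMod (n i)))
  | none => tnwG m n
  | some i => tnwT m n w i

lemma tnwT_pow (i : Fin m) : tnwT m n w i ^ n i = tnwG m n ^ w i := by
  have hdvd : n i ∣ w i * ∏ j, n j :=
    Dvd.dvd.mul_left (Finset.dvd_prod_of_mem n (Finset.mem_univ i)) _
  unfold tnwT tnwG
  rw [← ofAdd_nsmul, ← ofAdd_nsmul]
  congr 1
  refine Prod.ext ?_ ?_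
  · show (n i : ℤ) * _ = (w i : ℤ) * _
    rw [← Nat.cast_mul, ← Nat.cast_mul, Nat.mul_div_cancel' hdvd]
  · show n i • Pi.single i (1 : ZMod (n i)) = w i • (0 : (j : Fin m) → ZMod (n j))
    rw [smul_zero, ← Pi.single_smul]
    simp [nsmul_eq_mul]

lemma tnw_lift_rels : ∀ r ∈ tnwRels m n w, FreeGroup.lift (tnwF m n w) r = 1 := by
  rintro r (⟨x, y, rfl⟩ | ⟨i, rfl⟩)
  · simp [commutatorElement_def, mul_comm]
  · simp only [map_mul, map_pow, map_inv, FreeGroup.lift_apply_of]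
    show tnwF m n w (some i) ^ n i * ((tnwF m n w none) ^ w i)⁻¹ = 1
    rw [show tnwF m n w (some i) = tnwT m n w i from rfl,
      show tnwF m n w none = tnwG m n from rfl, tnwT_pow, mul_inv_cancel]

/-- homomorphism -/
def tnwPhi : PresentedGroup (tnwRels m n w) →*
    Multiplicative (ℤ × ((i : Fin m) → ZMod (n i))) :=
  PresentedGroup.toGroup (tnw_lift_rels m n w)

lemma tnwPhi_of (x : Option (Fin m)) : tnwPhi m n w (PresentedGroup.of x) = tnwF m n w x :=
  PresentedGroup.toGroup.of _

/-- Relation in the presented group. -/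
lemma tnw_rel (i : Fin m) :
    (PresentedGroup.of (some i) : PresentedGroup (tnwRels m n w)) ^ n i
      = PresentedGroup.of none ^ w i := by
  have hmem : FreeGroup.of (some i) ^ n i * (FreeGroup.of (none : Option (Fin m)) ^ w i)⁻¹
      ∈ tnwRels m n w := Or.inr ⟨i, rfl⟩
  have : PresentedGroup.mk (tnwRels m n w)
      (FreeGroup.of (some i) ^ n i * (FreeGroup.of none ^ w i)⁻¹) = 1 :=
    (QuotientGroup.eq_one_iff _).2 (Subgroup.subset_normalClosure hmem)
  rw [map_mul, map_inv, map_pow, map_pow] at this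
  exact mul_inv_eq_one.mp this

lemma tnw_comm_of (x y : Option (Fin m)) :
    Commute (PresentedGroup.of (rels := tnwRels m n w) x) (PresentedGroup.of y) := by
  have hmem : ⁅FreeGroup.of x, FreeGroup.of y⁆ ∈ tnwRels m n w := Or.inl ⟨x, y, rfl⟩
  have : PresentedGroup.mk (tnwRels m n w) ⁅FreeGroup.of x, FreeGroup.of y⁆ = 1 :=
    (QuotientGroup.eq_one_iff _).2 (Subgroup.subset_normalClosure hmem)
  rw [map_commutatorElement] at this
  exact commutatorElement_eq_one_iff_commute.mp this

lemma tnw_comm : ∀ a b : PresentedGroup (tnwRels m n w), a * b = b * a := by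
  have h1 : ∀ (x : Option (Fin m)) (b : PresentedGroup (tnwRels m n w)),
      PresentedGroup.of x * b = b * PresentedGroup.of x := by
    intro x b
    have hb : b ∈ Subgroup.centralizer {PresentedGroup.of (rels := tnwRels m n w) x} :=
      PresentedGroup.generated_by _ _
        (fun j => Subgroup.mem_centralizer_iff.mpr (by
          rintro g hg
          rw [Set.mem_singleton_iff] at hg
          subst hg
          exact (tnw_comm_of m n w x j).eq)) b
    exact Subgroup.mem_centralizer_iff.mp hb _ rfl
  intro a b
  have ha : a ∈ Subgroup.centralizer {b} :=
    PresentedGroup.generated_by _ _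
      (fun j => Subgroup.mem_centralizer_iff.mpr (by
        rintro g hg
        rw [Set.mem_singleton_iff] at hg
        subst hg
        exact (h1 j g).symm)) a
  exact (Subgroup.mem_centralizer_iff.mp ha b rfl).symm

/-- commutative group structure -/
@[reducible]
noncomputable def tnwComm : CommGroup (PresentedGroup (tnwRels m n w)) :=
  { (inferInstance : Group (PresentedGroup (tnwRels m n w))) with
    mul_comm := tnw_comm m n w }

lemma tnw_zpow_sum {G ι : Type*} [CommGroup G] (a : G) (s : Finset ι) (f : ι → ℤ) :
    ∏ i ∈ s, a ^ f i = a ^ (∑ i ∈ s, f i) := by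
  induction s using Finset.cons_induction with
  | empty => simp
  | cons i s hi ih => rw [Finset.prod_cons, Finset.sum_cons, ih, zpow_add]

/-- product of powers of the `τᵢ` -/
noncomputable def tnwProd (c : Fin m → ℤ) : PresentedGroup (tnwRels m n w) :=
  letI := tnwComm m n w
  ∏ i, PresentedGroup.of (some i) ^ (c i)

lemma tnwProd_single (i : Fin m) :
    tnwProd m n w (Pi.single i 1) = PresentedGroup.of (some i) := by
  letI := tnwComm m n w
  show ∏ j, PresentedGroup.of (rels := tnwRels m n w) (some j) ^ ((Pi.single i (1 : ℤ) : Fin m → ℤ) j) = _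
  rw [Finset.prod_eq_single i (fun j _ hj => by simp [Pi.single_eq_of_ne hj]) (by simp)]
  simp

lemma tnw_rep (x : PresentedGroup (tnwRels m n w)) :
    ∃ (a : ℤ) (c : Fin m → ℤ), x = PresentedGroup.of none ^ a * tnwProd m n w c := by
  letI := tnwComm m n w
  let H : Subgroup (PresentedGroup (tnwRels m n w)) :=
    { carrier := {x | ∃ (a : ℤ) (c : Fin m → ℤ),
        x = PresentedGroup.of none ^ a * tnwProd m n w c}
      one_mem' := ⟨0, 0, by simp [tnwProd]⟩
      mul_mem' := by
        rintro x y ⟨a, c, rfl⟩ ⟨b, d, rfl⟩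
        refine ⟨a + b, c + d, ?_⟩
        simp only [tnwProd, zpow_add, Pi.add_apply, Finset.prod_mul_distrib]
        exact mul_mul_mul_comm _ _ _ _
      inv_mem' := by
        rintro x ⟨a, c, rfl⟩
        refine ⟨-a, -c, ?_⟩
        simp only [tnwProd, mul_inv_rev, zpow_neg, Pi.neg_apply, Finset.prod_inv_distrib]
        exact mul_comm _ _ }
  refine PresentedGroup.generated_by _ H (fun j => ?_) x
  cases j with
  | none => exact ⟨1, 0, by simp [tnwProd]⟩
  | some i =>
      exact ⟨0, Pi.single i 1, by rw [zpow_zero, one_mul, tnwProd_single]⟩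

lemma tnw_red (hn : ∀ i, 2 ≤ n i) (x : PresentedGroup (tnwRels m n w)) :
    ∃ (a : ℤ) (r : Fin m → ℤ), (∀ i, 0 ≤ r i ∧ r i < n i) ∧
      x = PresentedGroup.of none ^ a * tnwProd m n w r := by
  letI := tnwComm m n w
  obtain ⟨a, c, rfl⟩ := tnw_rep m n w x
  have hpos : ∀ i, (0 : ℤ) < n i := fun i => by
    have := hn i; exact_mod_cast Nat.lt_of_lt_of_le Nat.zero_lt_two this
  refine ⟨a + ∑ i, (w i : ℤ) * (c i / n i), fun i => c i % n i,
    fun i => ⟨Int.emod_nonneg _ (hpos i).ne', Int.emod_lt_of_pos _ (hpos i)⟩, ?_⟩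
  have hone : ∀ i, (PresentedGroup.of (some i) : PresentedGroup (tnwRels m n w)) ^ (c i) =
      PresentedGroup.of none ^ ((w i : ℤ) * (c i / n i)) *
        PresentedGroup.of (some i) ^ (c i % n i) := by
    intro i
    conv_lhs => rw [← Int.mul_ediv_add_emod (c i) (n i)]
    rw [zpow_add, zpow_mul, zpow_natCast, tnw_rel m n w i,
      ← zpow_natCast (PresentedGroup.of none) (w i), ← zpow_mul]
  show PresentedGroup.of none ^ a * ∏ i, PresentedGroup.of (some i) ^ (c i) =
      PresentedGroup.of none ^ _ * ∏ i, PresentedGroup.of (some i) ^ (c i % n i)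
  calc PresentedGroup.of none ^ a * ∏ i, PresentedGroup.of (some i) ^ (c i)
      = PresentedGroup.of none ^ a *
        ((∏ i, PresentedGroup.of (none : Option (Fin m)) ^ ((w i : ℤ) * (c i / n i))) *
          ∏ i, PresentedGroup.of (some i) ^ (c i % n i)) := by
        rw [← Finset.prod_mul_distrib]
        congr 1
        exact Finset.prod_congr rfl (fun i _ => hone i)
    _ = _ := by
        rw [tnw_zpow_sum, ← mul_assoc, ← zpow_add]

lemma tnwProd_zero : tnwProd m n w 0 = 1 := by
  letI := tnwComm m n w
  show ∏ j, PresentedGroup.of (rels := tnwRels m n w) (some j) ^ ((0 : Fin m → ℤ) j) = 1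
  simp

lemma tnwPhi_eval (a : ℤ) (r : Fin m → ℤ) :
    tnwPhi m n w (PresentedGroup.of none ^ a * tnwProd m n w r) =
      Multiplicative.ofAdd
        (a * (∏ j, n j : ℕ) + ∑ i, r i * ((w i * (∏ j, n j) / n i : ℕ) : ℤ),
         fun j => ((r j : ℤ) : ZMod (n j))) := by
  letI := tnwComm m n w
  have hprod : tnwPhi m n w (tnwProd m n w r) = ∏ i, tnwT m n w i ^ r i := by
    show tnwPhi m n w (∏ i, PresentedGroup.of (some i) ^ r i) = _
    rw [map_prod]
    exact Finset.prod_congr rfl fun i _ => by rw [map_zpow, tnwPhi_of]; rfl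
  rw [map_mul, map_zpow, tnwPhi_of, hprod]
  show tnwG m n ^ a * _ = _
  unfold tnwG tnwT
  simp only [← ofAdd_zsmul, ← ofAdd_sum, ← ofAdd_add]
  congr 1
  refine Prod.ext ?_ ?_
  · simp [Prod.fst_sum, smul_eq_mul]
  · simp only [Prod.snd_add, Prod.smul_snd, smul_zero, Prod.snd_sum, zero_add]
    have h2 : ∀ i, (r i • ((Pi.single i 1 : (k : Fin m) → ZMod (n k))))
        = Pi.single (M := fun k => ZMod (n k)) i ((r i : ZMod (n i))) := by
      intro i
      rw [← Pi.single_smul]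
      congr 1
      rw [zsmul_eq_mul, mul_one]
    rw [Finset.sum_congr rfl fun i _ => h2 i,
      Finset.univ_sum_single (fun j => ((r j : ZMod (n j)) : ZMod (n j)))]

end Aux

/-- The abelian group `⟨γ, τ₁, …, τ_m | [·,·] = 1, τᵢ^{nᵢ} = γ^{wᵢ}⟩` is
isomorphic to the subgroup of `ℤ × ∏ᵢ ℤ/nᵢℤ` generated by `g = (ℓ,0,…,0)` and
`tᵢ = (wᵢℓ/nᵢ, eᵢ)`, via `γ ↦ g` and `τᵢ ↦ tᵢ`. -/
theorem stmt_17 (m : ℕ) (hm : 1 ≤ m) (n w : Fin m → ℕ)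
    (hn : ∀ i, 2 ≤ n i) (hw : ∀ i, 1 ≤ w i) :
    ∃ φ : PresentedGroup (tnwRels m n w) →*
        Multiplicative (ℤ × ((i : Fin m) → ZMod (n i))),
      Function.Injective φ ∧
      φ (PresentedGroup.of none) = tnwG m n ∧
      (∀ i : Fin m, φ (PresentedGroup.of (some i)) = tnwT m n w i) ∧
      φ.range = Subgroup.closure ({tnwG m n} ∪ Set.range (tnwT m n w)) := by
  refine ⟨tnwPhi m n w, ?_, tnwPhi_of m n w none, fun i => tnwPhi_of m n w (some i), ?_⟩
  · rw [injective_iff_map_eq_one]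
    intro x hx
    obtain ⟨a, r, hr, rfl⟩ := tnw_red m n w hn x
    rw [tnwPhi_eval] at hx
    have h0 : (a * (∏ j, n j : ℕ) + ∑ i, r i * ((w i * (∏ j, n j) / n i : ℕ) : ℤ),
        fun j => ((r j : ℤ) : ZMod (n j))) = (0 : ℤ × ((i : Fin m) → ZMod (n i))) :=
      Multiplicative.ofAdd.injective hx
    have hsnd : ∀ j, ((r j : ℤ) : ZMod (n j)) = 0 := fun j =>
      congrFun (congrArg Prod.snd h0) j
    have hrz : ∀ j, r j = 0 := by
      intro j
      have hdvd : ((n j : ℤ)) ∣ r j := (ZMod.intCast_zmod_eq_zero_iff_dvd _ _).mp (hsnd j)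
      have h1 := (hr j).1
      have h2 := (hr j).2
      rw [← Int.emod_eq_of_lt h1 h2]
      exact Int.emod_eq_zero_of_dvd hdvd
    have hfst : a * (∏ j, n j : ℕ) = 0 := by
      have := congrArg Prod.fst h0
      simp only [hrz, zero_mul, Finset.sum_const_zero, add_zero] at this
      exact this
    have hl : ((∏ j, n j : ℕ) : ℤ) ≠ 0 := by
      have : 0 < ∏ j, n j := Finset.prod_pos fun i _ => lt_of_lt_of_le Nat.zero_lt_two (hn i)
      exact_mod_cast this.ne'
    have ha : a = 0 := by
      rcases mul_eq_zero.mp hfst with h | h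
      · exact h
      · exact absurd h hl
    rw [ha, show r = 0 from funext hrz, tnwProd_zero, zpow_zero, one_mul]
  · rw [MonoidHom.range_eq_map, ← PresentedGroup.closure_range_of (tnwRels m n w),
      MonoidHom.map_closure]
    congr 1
    rw [← Set.range_comp]
    have : (tnwPhi m n w) ∘ PresentedGroup.of = tnwF m n w :=
      funext fun x => tnwPhi_of m n w x
    rw [this, Option.range_eq]
    rw [Set.insert_eq]
    rfl
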